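/- Let φ be a nontrivial exponential map on an integral domain A over a field k of characteristic p ≥ 0, and let x ∈ A be an element of minimal positive φ-degree (i.e., deg_φ(x) = n > 0 and every element of A with positive φ-degree has φ-degree at least n). Then D^i(x) ∈ A^φ for every i ≥ 1, and moreover D^i(x) = 0 whenever i ≥ 1 is not a power of p. -/
import Mathlib


open Polynomial

/-- An exponential map on a `k`-algebra `A`: a `k`-algebra homomorphism `φ : A → A[U]`
such that evaluating at `U = 0` is the identity and `φ_S φ_U = φ_{S+U}`. -/
def IsExpMap {k A : Type*} [CommSemiring k] [CommSemiring A] [Algebra k A]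
    (φ : A →ₐ[k] A[X]) : Prop :=
  (∀ a : A, (φ a).eval 0 = a) ∧
  (∀ a : A,
    eval₂ ((mapRingHom (C : A →+* A[X])).comp (φ : A →+* A[X])) (C X) (φ a)
      = eval₂ ((C : A[X] →+* A[X][X]).comp (C : A →+* A[X])) (X + C X) (φ a))

/-- The ring of `φ`-invariants `A^φ = {a : A | φ a = a}`. -/
noncomputable def expInv {k A : Type*} [CommSemiring k] [CommSemiring A] [Algebra k A]
    (φ : A →ₐ[k] A[X]) : Subalgebra k A :=
  AlgHom.equalizer φ (IsScalarTower.toAlgHom k A A[X])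

/-- The AK invariant: the intersection of the rings of invariants of all exponential maps. -/
noncomputable def AK (k A : Type*) [CommSemiring k] [CommSemiring A] [Algebra k A] : Subalgebra k A :=
  ⨅ φ ∈ {ψ : A →ₐ[k] A[X] | IsExpMap ψ}, expInv φ

/-- The fundamental coefficient identity for exponential maps:
`D^j(D^i(a)) = (i+j choose j) * D^(i+j)(a)`. -/
theorem expMap_coeff_coeff {k A : Type*} [CommSemiring k] [CommSemiring A] [Algebra k A]
    (φ : A →ₐ[k] A[X]) (hφ : IsExpMap φ) (a : A) (i j : ℕ) :
    (φ ((φ a).coeff i)).coeff j = ((i + j).choose j : A) * (φ a).coeff (i + j) := by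
  have E := congrArg (fun q : A[X][X] => (q.coeff j).coeff i) (hφ.2 a)
  simp only [eval₂_eq_sum, Polynomial.sum_def, RingHom.coe_comp, Function.comp_apply,
    coe_mapRingHom, finset_sum_coeff, ← C_pow, coeff_mul_C, coeff_map, coeff_C_mul,
    coeff_X_add_C_pow, coeff_mul_natCast, coeff_X_pow] at E
  rw [Finset.sum_eq_single i, Finset.sum_eq_single (i + j)] at E
  · simpa [mul_comm] using E
  · intro e he hne
    rcases eq_or_ne (e - j) i with h | h
    · have hej : e < j := by
        rcases Nat.lt_or_ge e j with h' | h'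
        · exact h'
        · omega
      simp [Nat.choose_eq_zero_of_lt hej]
    · rw [if_neg (mt Eq.symm h), zero_mul, mul_zero]
  · intro h
    simp [Polynomial.notMem_support_iff.mp h]
  · intro e he hne
    rw [if_neg (mt Eq.symm hne), mul_zero]
  · intro h
    simp [Polynomial.notMem_support_iff.mp h]

theorem not_dvd_choose_pow_mul {p : ℕ} (hp : p.Prime) {s : ℕ} (hs : ¬ p ∣ s) (v : ℕ) :
    ¬ p ∣ (p ^ v * s).choose (p ^ v) := by
  haveI : Fact p.Prime := ⟨hp⟩
  induction v with
  | zero => simpa using hs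
  | succ v ih =>
    have key := Choose.choose_modEq_choose_mod_mul_choose_div_nat
      (n := p ^ (v + 1) * s) (k := p ^ (v + 1)) (p := p)
    have h1 : (p ^ (v + 1) * s) % p = 0 :=
      Nat.mod_eq_zero_of_dvd (Dvd.dvd.mul_right (dvd_pow_self p (Nat.succ_ne_zero v)) s)
    have h2 : (p ^ (v + 1)) % p = 0 := Nat.mod_eq_zero_of_dvd (dvd_pow_self p (Nat.succ_ne_zero v))
    have h3 : (p ^ (v + 1) * s) / p = p ^ v * s := by
      rw [pow_succ, mul_comm (p ^ v) p, mul_assoc, Nat.mul_div_cancel_left _ hp.pos]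
    have h4 : (p ^ (v + 1)) / p = p ^ v := by
      rw [pow_succ, Nat.mul_div_cancel _ hp.pos]
    rw [h1, h2, h3, h4, Nat.choose_zero_right, one_mul] at key
    intro hdvd
    exact ih ((Nat.modEq_zero_iff_dvd).mp ((((Nat.modEq_zero_iff_dvd).mpr hdvd).symm.trans key).symm))

/-- Let `φ` be a nontrivial exponential map on a domain `A` over a field `k`
of characteristic `p ≥ 0`, and let `x` have minimal positive `φ`-degree `n`. Then
`D^i(x) ∈ A^φ` for all `i ≥ 1`, and `D^i(x) = 0` whenever `i ≥ 1` is not a power of `p`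
(where for `p = 0`, the powers of `p` occurring are exactly `0^0 = 1`). -/
theorem statement6 {k A : Type*} [Field k] [CommRing A] [IsDomain A] [Algebra k A]
    (p : ℕ) [CharP k p]
    (φ : A →ₐ[k] A[X]) (hφ : IsExpMap φ)
    (hnt : φ ≠ IsScalarTower.toAlgHom k A A[X])
    (x : A) (n : ℕ) (hn : 0 < n) (hxn : (φ x).natDegree = n)
    (hmin : ∀ a : A, 0 < (φ a).natDegree → n ≤ (φ a).natDegree) :
    (∀ i : ℕ, 1 ≤ i → (φ x).coeff i ∈ expInv φ) ∧
    (∀ i : ℕ, 1 ≤ i → (¬ ∃ m : ℕ, i = p ^ m) → (φ x).coeff i = 0) := by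
  have key := expMap_coeff_coeff φ hφ x
  have part1 : ∀ i : ℕ, 1 ≤ i → (φ x).coeff i ∈ expInv φ := by
    intro i hi
    set d := (φ x).coeff i with hd
    have hdeg : (φ d).natDegree ≤ n - 1 := by
      rw [natDegree_le_iff_coeff_eq_zero]
      intro N hN
      rw [key i N]
      have hlt : (φ x).natDegree < i + N := by omega
      rw [coeff_eq_zero_of_natDegree_lt hlt, mul_zero]
    have h0 : (φ d).natDegree = 0 := by
      rcases Nat.eq_zero_or_pos ((φ d).natDegree) with h | h
      · exact h
      · have := hmin d h; omega
    have hCd : φ d = C d := by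
      conv_lhs => rw [eq_C_of_natDegree_eq_zero h0]
      rw [coeff_zero_eq_eval_zero, hφ.1]
    show φ d = (IsScalarTower.toAlgHom k A A[X]) d
    rw [hCd]; rfl
  refine ⟨part1, ?_⟩
  intro i hi hnp
  obtain ⟨t, ht0, hti, htd⟩ : ∃ t, 0 < t ∧ t < i ∧ ¬ p ∣ i.choose t := by
    rcases CharP.char_is_prime_or_zero k p with hp | hp
    · have hi0 : i ≠ 0 := by omega
      obtain ⟨v, s, hps, hmul⟩ : ∃ v s : ℕ, ¬ p ∣ s ∧ p ^ v * s = i :=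
        ⟨i.factorization p, i / p ^ (i.factorization p), Nat.not_dvd_ordCompl hp hi0,
          Nat.ordProj_mul_ordCompl_eq_self i p⟩
      have hs1 : s ≠ 1 := by
        intro h
        exact hnp ⟨v, by rw [← hmul, h, mul_one]⟩
      have hs0 : s ≠ 0 := by
        intro h
        rw [h, mul_zero] at hmul
        omega
      have hpv : 0 < p ^ v := pow_pos hp.pos v
      refine ⟨p ^ v, hpv, ?_, ?_⟩
      · have h2 : 2 ≤ s := by omega
        rw [← hmul]
        exact (Nat.lt_mul_iff_one_lt_right hpv).mpr (by omega)
      · rw [← hmul]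
        exact not_dvd_choose_pow_mul hp hps v
    · subst hp
      have hi2 : 2 ≤ i := by
        rcases Nat.lt_or_ge i 2 with h | h
        · have : i = 1 := by omega
          exact absurd ⟨0, by rw [this, pow_zero]⟩ hnp
        · exact h
      refine ⟨1, one_pos, by omega, ?_⟩
      rw [Nat.choose_one_right]
      simpa using (by omega : i ≠ 0)
  have hinj : Function.Injective (algebraMap k A) := (algebraMap k A).injective
  haveI : CharP A p := charP_of_injective_algebraMap hinj p
  have hCne : ((i.choose t : A)) ≠ 0 := by
    rw [Ne, CharP.cast_eq_zero_iff A p]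
    exact htd
  have hinv : φ ((φ x).coeff t) = C ((φ x).coeff t) := by
    have h' : φ ((φ x).coeff t) = (IsScalarTower.toAlgHom k A A[X]) ((φ x).coeff t) :=
      part1 t ht0
    rw [h']; rfl
  have hz := key t (i - t)
  rw [hinv, coeff_C, if_neg (by omega : i - t ≠ 0)] at hz
  rw [show t + (i - t) = i by omega, Nat.choose_symm hti.le] at hz
  rcases mul_eq_zero.mp hz.symm with h | h
  · exact absurd h hCne
  · exact h
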